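/- Let A₁ and A₂ be n×n complex Hermitian matrices such that A₁ + I is positive semidefinite and A₂ is positive semidefinite, and set ρ₂ = ρ(A₂). Let C be the 2n×2n block matrix C = [[0, I], [-(A₁+I), -A₂]]. Then every eigenvalue μ of C satisfies Re(μ) ∈ [-ρ₂, 0]. -/

import Mathlib

open Matrix
open scoped ComplexOrder

/-- The spectral radius of a square complex matrix: the supremum of the moduli
of its eigenvalues. -/
noncomputable def specRad {n : ℕ} (M : Matrix (Fin n) (Fin n) ℂ) : ℝ :=
  sSup ((fun μ => ‖μ‖) '' spectrum ℂ M)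

private lemma quad_re_aux (ρ₂ P Q S B A : ℝ) (hS : 0 < S) (hA : 0 ≤ A) (hB : 0 ≤ B)
    (hBle : B ≤ ρ₂ * S) (hre : (P * P - Q * Q) * S + P * B + A = 0)
    (him : (P * Q + Q * P) * S + Q * B = 0) : -ρ₂ ≤ P ∧ P ≤ 0 := by
  have hρnn : 0 ≤ ρ₂ := by nlinarith
  constructor
  · rcases eq_or_ne Q 0 with hq | hq
    · subst hq
      by_contra hcon
      push_neg at hcon
      have hneg : P < 0 := lt_of_lt_of_le hcon (neg_nonpos.mpr hρnn)
      have h3 : P * S + B < 0 := by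
        nlinarith [mul_pos hS (show (0:ℝ) < -(P + ρ₂) by linarith)]
      nlinarith [mul_pos (neg_pos.2 hneg) (neg_pos.2 h3)]
    · have h2pB : 2 * P * S + B = 0 := by
        rcases mul_eq_zero.mp (show Q * (2 * P * S + B) = 0 by linear_combination him) with h | h
        · exact absurd h hq
        · exact h
      by_contra hcon
      push_neg at hcon
      have := mul_pos hS (show (0:ℝ) < -(2 * P + ρ₂) by linarith)
      nlinarith
  · rcases eq_or_ne Q 0 with hq | hq
    · subst hq
      by_contra hcon
      push_neg at hcon
      nlinarith [mul_pos (mul_pos hcon hcon) hS, mul_nonneg hcon.le hB]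
    · have h2pB : 2 * P * S + B = 0 := by
        rcases mul_eq_zero.mp (show Q * (2 * P * S + B) = 0 by linear_combination him) with h | h
        · exact absurd h hq
        · exact h
      by_contra hcon
      push_neg at hcon
      nlinarith [mul_pos hcon hS]

theorem spectrum_double_size_re {n : ℕ} (A₁ A₂ : Matrix (Fin n) (Fin n) ℂ)
    (hH₁ : A₁.IsHermitian) (hH₂ : A₂.IsHermitian)
    (hpsd₁ : (A₁ + 1).PosSemidef) (hpsd₂ : A₂.PosSemidef)
    (ρ₂ : ℝ) (hρ₂ : ρ₂ = specRad A₂)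
    (C : Matrix (Fin n ⊕ Fin n) (Fin n ⊕ Fin n) ℂ)
    (hC : C = Matrix.fromBlocks 0 1 (-(A₁ + 1)) (-A₂))
    (μ : ℂ) (hμ : μ ∈ spectrum ℂ C) :
    μ.re ∈ Set.Icc (-ρ₂) (0 : ℝ) := by
  classical
  -- every real spectral value ν of A₂ satisfies |ν| ≤ ρ₂
  have hspec : ∀ ν ∈ spectrum ℝ A₂, |ν| ≤ ρ₂ := by
    intro ν hν
    have hνℂ : (ν : ℂ) ∈ spectrum ℂ A₂ := spectrum.algebraMap_mem ℂ hν
    have hbdd : BddAbove ((fun μ => ‖μ‖) '' spectrum ℂ A₂) :=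
      ((A₂.finite_spectrum).image _).bddAbove
    have : ‖(ν : ℂ)‖ ≤ specRad A₂ := le_csSup hbdd ⟨_, hνℂ, rfl⟩
    simpa [hρ₂, Complex.norm_real] using this
  -- the matrix ρ₂ • 1 - A₂ is PSD
  have hMH : ((ρ₂ : ℂ) • (1 : Matrix (Fin n) (Fin n) ℂ) - A₂).IsHermitian := by
    unfold Matrix.IsHermitian
    simp [conjTranspose_smul, hH₂.eq, Complex.conj_ofReal]
  have hMpsd : ((ρ₂ : ℂ) • (1 : Matrix (Fin n) (Fin n) ℂ) - A₂).PosSemidef := by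
    rw [hMH.posSemidef_iff_eigenvalues_nonneg, Pi.le_def]
    intro i
    have hmem := hMH.eigenvalues_mem_spectrum_real i
    have halg : (ρ₂ : ℂ) • (1 : Matrix (Fin n) (Fin n) ℂ) - A₂
        = algebraMap ℝ (Matrix (Fin n) (Fin n) ℂ) ρ₂ - A₂ := by
      congr 1
      ext i j
      simp [Matrix.algebraMap_matrix_apply, Matrix.smul_apply, Matrix.one_apply, mul_ite]
    have hmem' : hMH.eigenvalues i ∈
        spectrum ℝ (algebraMap ℝ (Matrix (Fin n) (Fin n) ℂ) ρ₂ - A₂) := by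
      rw [← halg]; exact hmem
    rw [← spectrum.singleton_sub_eq] at hmem'
    obtain ⟨r, hr, ν, hν, hrν⟩ := hmem'
    rw [Set.mem_singleton_iff] at hr
    subst hr
    have h1 := abs_le.mp (hspec ν hν)
    rw [← hrν]
    show (0:ℝ) ≤ r - ν
    linarith [h1.2]
  -- get an eigenvector of C
  have hEig : Module.End.HasEigenvalue (Matrix.toLin' C) μ := by
    rw [Module.End.hasEigenvalue_iff_mem_spectrum]
    rwa [show Matrix.toLin' C = Matrix.toLinAlgEquiv' C from rfl,
      AlgEquiv.spectrum_eq Matrix.toLinAlgEquiv' C]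
  obtain ⟨v, hv⟩ := hEig.exists_hasEigenvector
  have hCv : C *ᵥ v = μ • v := by
    have := hv.apply_eq_smul
    rwa [Matrix.toLin'_apply] at this
  set x : Fin n → ℂ := fun i => v (Sum.inl i) with hx
  set y : Fin n → ℂ := fun i => v (Sum.inr i) with hy
  have hvxy : v = Sum.elim x y := by funext i; cases i <;> rfl
  have hv' : Matrix.fromBlocks 0 1 (-(A₁+1)) (-A₂) *ᵥ Sum.elim x y = μ • Sum.elim x y := by
    rw [← hC, ← hvxy]; exact hCv
  rw [Matrix.fromBlocks_mulVec] at hv'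
  have h1 : ∀ i, y i = μ * x i := by
    intro i
    have := congrFun hv' (Sum.inl i)
    simpa [Matrix.zero_mulVec, Matrix.one_mulVec] using this
  have h2 : ∀ i, -(((A₁+1) *ᵥ x) i) + -((A₂ *ᵥ y) i) = μ * y i := by
    intro i
    simpa only [Matrix.neg_mulVec, Pi.add_apply, Pi.neg_apply, Sum.elim_inr, Sum.elim_inl,
      Sum.elim_comp_inl, Sum.elim_comp_inr, Pi.smul_apply, smul_eq_mul]
      using congrFun hv' (Sum.inr i)
  have hy_eq : y = μ • x := by funext i; simp [h1 i, Pi.smul_apply, smul_eq_mul]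
  have hxne : x ≠ 0 := by
    intro hx0
    apply hv.2
    rw [hvxy, hx0, hy_eq, hx0]
    simp
  -- vector equation: μ² x + μ A₂ x + (A₁+1) x = 0
  have hveq : (μ^2) • x + μ • (A₂ *ᵥ x) + (A₁+1) *ᵥ x = 0 := by
    funext i
    have e := h2 i
    rw [hy_eq, Matrix.mulVec_smul] at e
    simp only [Pi.smul_apply, smul_eq_mul] at e
    simp only [Pi.add_apply, Pi.smul_apply, smul_eq_mul, Pi.zero_apply]
    linear_combination -e
  -- scalar equation
  set s : ℂ := dotProduct (star x) x with hs
  set b : ℂ := dotProduct (star x) (A₂ *ᵥ x) with hb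
  set a : ℂ := dotProduct (star x) ((A₁+1) *ᵥ x) with ha
  have hscal : μ^2 * s + μ * b + a = 0 := by
    have := congrArg (fun w => dotProduct (star x) w) hveq
    simpa [dotProduct_add, dotProduct_smul, smul_eq_mul, dotProduct_zero] using this
  have hs_pos : 0 < s := by
    rw [hs]
    exact Matrix.dotProduct_star_self_pos_iff.mpr hxne
  have ha_nn : 0 ≤ a := hpsd₁.dotProduct_mulVec_nonneg x
  have hb_nn : 0 ≤ b := hpsd₂.dotProduct_mulVec_nonneg x
  have hb_le : b ≤ (ρ₂ : ℂ) * s := by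
    have := hMpsd.dotProduct_mulVec_nonneg x
    rw [Matrix.sub_mulVec, Matrix.smul_mulVec, Matrix.one_mulVec,
      dotProduct_sub, dotProduct_smul] at this
    rw [← sub_nonneg]
    simpa [smul_eq_mul, hs, hb] using this
  -- extract real data
  rw [Complex.lt_def] at hs_pos
  rw [Complex.le_def] at ha_nn hb_nn hb_le
  have hsim : s.im = 0 := hs_pos.2.symm
  have haim : a.im = 0 := ha_nn.2.symm
  have hbim : b.im = 0 := hb_nn.2.symm
  have hS : 0 < s.re := by simpa using hs_pos.1
  have hA : 0 ≤ a.re := by simpa using ha_nn.1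
  have hB : 0 ≤ b.re := by simpa using hb_nn.1
  have hBle : b.re ≤ ρ₂ * s.re := by
    have := hb_le.1
    simpa [Complex.mul_re, hsim] using this
  have hre := congrArg Complex.re hscal
  have him := congrArg Complex.im hscal
  simp only [Complex.add_re, Complex.add_im, Complex.mul_re, Complex.mul_im, Complex.zero_re,
    Complex.zero_im, pow_two, hsim, haim, hbim, mul_zero, zero_mul, sub_zero, add_zero,
    zero_add] at hre him
  exact quad_re_aux ρ₂ μ.re μ.im s.re b.re a.re hS hA hB hBle (by linarith [hre]) (by linarith [him])
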